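/- Let (p_k)_{k≥1} be a summable sequence of real numbers such that the sequence k ↦ d_k·|Σ_{i≥k} p_i| is summable. Then Σ_{k≥1} d_k·|Σ_{i≥k} p_i| ≥ (1/2)·Σ_{k≥1} |p_k|; that is, ‖p‖_{1D} ≥ (1/2)‖p‖_1. -/
import Mathlib


/-- Let `(d_k)_{k≥1}` be a nondecreasing sequence of positive reals with
`d_1 = 1` (here indexed so that `d k` stands for `d_{k+1}`).  If `(p_k)_{k≥1}` is a summable
real sequence (here `p k` stands for `p_{k+1}`) such that `k ↦ d_k·|Σ_{i≥k} p_i|` is summable,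
then `Σ_{k≥1} d_k·|Σ_{i≥k} p_i| ≥ (1/2)·Σ_{k≥1} |p_k|`, i.e. `‖p‖_{1D} ≥ (1/2)‖p‖_1`. -/
theorem norm1D_ge_half_l1
    (d : ℕ → ℝ) (hd1 : d 0 = 1) (hdpos : ∀ k, 0 < d k) (hdmono : Monotone d)
    (p : ℕ → ℝ) (hp : Summable p)
    (hD : Summable (fun k : ℕ => d k * |∑' i : ℕ, p (k + i)|)) :
    (∑' k : ℕ, d k * |∑' i : ℕ, p (k + i)|) ≥ (1 / 2) * ∑' k : ℕ, |p k| := by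
  set g : ℕ → ℝ := fun k => d k * |∑' i : ℕ, p (k + i)| with hg
  have hd_one : ∀ k, (1 : ℝ) ≤ d k := fun k => hd1 ▸ hdmono (Nat.zero_le k)
  have hgnonneg : ∀ k, 0 ≤ g k := fun k =>
    mul_nonneg (hdpos k).le (abs_nonneg _)
  have hgsucc : Summable (fun k => g (k + 1)) :=
    hD.comp_injective fun a b h => Nat.succ_injective h
  -- pointwise bound
  have hkey : ∀ k, |p k| ≤ g k + g (k + 1) := by
    intro k
    have hsum : (∑' i : ℕ, p (k + i)) = p k + ∑' i : ℕ, p (k + 1 + i) := by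
      have h := Summable.tsum_eq_zero_add (f := fun i => p (k + i))
        (hp.comp_injective (add_right_injective k))
      simp only [add_zero] at h
      rw [h]
      exact congrArg (p k + ·) (tsum_congr fun i => by rw [show k + (i + 1) = k + 1 + i by ring])
    have h1 : p k = (∑' i : ℕ, p (k + i)) - ∑' i : ℕ, p (k + 1 + i) := by
      rw [hsum]; ring
    calc |p k| ≤ |∑' i : ℕ, p (k + i)| + |∑' i : ℕ, p (k + 1 + i)| := by
          rw [h1]; exact abs_sub _ _
      _ ≤ g k + g (k + 1) := by
          apply add_le_add
          · exact le_mul_of_one_le_left (abs_nonneg _) (hd_one k)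
          · exact le_mul_of_one_le_left (abs_nonneg _) (hd_one (k + 1))
  have h1 : (∑' k, |p k|) ≤ ∑' k, (g k + g (k + 1)) :=
    Summable.tsum_le_tsum hkey hp.abs (hD.add hgsucc)
  have h2 : (∑' k, (g k + g (k + 1))) = (∑' k, g k) + ∑' k, g (k + 1) :=
    Summable.tsum_add hD hgsucc
  have h3 : (∑' k, g (k + 1)) ≤ ∑' k, g k := by
    apply Summable.tsum_le_tsum_of_inj (fun n => n + 1) (fun a b h => Nat.succ_injective h)
      (fun c _ => hgnonneg c) (fun n => le_refl _) hgsucc hD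
  linarith
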